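/- Convergence of gradient descent with multiplicatively biased gradients (deterministic skeleton of Theorem 1): let d, T be positive integers, S > 0, α ∈ (0,1], B ≥ 0, G ≥ 0. Let L : ℝ^d → ℝ be differentiable with ∇L Lipschitz with constant S, bounded below by L* ∈ ℝ, and with |∂_j L(θ)| ≤ G for all θ and all j. Let θ⁰, θ¹, …, θ^T ∈ ℝ^d satisfy θ^{t+1} = θ^t − (1/S)·g^t, where each g^t has components g^t_j = a^t_j · ∂_j L(θ^t) + c^t_j with α ≤ a^t_j ≤ 1 and |c^t_j| ≤ B. Then (1/T) Σ_{t=0}^{T−1} ‖∇L(θ^t)‖₂² ≤ 2S(L(θ⁰) − L*)/(α·T) + (2d/α)·((1 − α)·B·G + B²/2). In particular the average squared gradient norm is bounded by a term decaying as O(1/T) plus a noise-induced constant, so the biased-gradient iteration converges at the same O(1/√T) rate as the unbiased one. -/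

import Mathlib

open InnerProductSpace

/-- Descent lemma: if `L` has `S`-Lipschitz gradient then
`L y ≤ L x + ⟪∇L x, y - x⟫ + S/2 ‖y - x‖²`. -/
lemma descent_lemma {F : Type*} [NormedAddCommGroup F] [InnerProductSpace ℝ F]
    [CompleteSpace F] (L : F → ℝ) (hdiff : Differentiable ℝ L) (S : ℝ) (hS : 0 ≤ S)
    (hlip : LipschitzWith S.toNNReal (gradient L)) (x y : F) :
    L y ≤ L x + (inner ℝ (gradient L x) (y - x) : ℝ) + S / 2 * ‖y - x‖ ^ 2 := by
  set v := y - x with hv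
  have hline : ∀ s : ℝ, HasDerivAt (fun s : ℝ => x + s • v) v s := by
    intro s
    simpa using ((hasDerivAt_id s).smul_const v).const_add x
  have hgradinner : ∀ p : F, fderiv ℝ L p v = (inner ℝ (gradient L p) v : ℝ) := by
    intro p
    have : fderiv ℝ L p = toDual ℝ F (gradient L p) :=
      ((toDual ℝ F).apply_symm_apply (fderiv ℝ L p)).symm
    rw [this, toDual_apply_apply]
  have hφ : ∀ s : ℝ, HasDerivAt (fun s : ℝ => L (x + s • v))
      (inner ℝ (gradient L (x + s • v)) v : ℝ) s := by
    intro s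
    have h1 := (hdiff (x + s • v)).hasFDerivAt.comp_hasDerivAt s (hline s)
    rw [← hgradinner]; exact h1
  set ψ : ℝ → ℝ := fun s => L x + s * (inner ℝ (gradient L x) v : ℝ)
      + S / 2 * ‖v‖ ^ 2 * s ^ 2 - L (x + s • v) with hψdef
  have hψ : ∀ s : ℝ, HasDerivAt ψ
      ((inner ℝ (gradient L x) v : ℝ) + S * ‖v‖ ^ 2 * s
        - (inner ℝ (gradient L (x + s • v)) v : ℝ)) s := by
    intro s
    have h1 : HasDerivAt (fun s : ℝ => L x + s * (inner ℝ (gradient L x) v : ℝ)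
        + S / 2 * ‖v‖ ^ 2 * s ^ 2)
        ((inner ℝ (gradient L x) v : ℝ) + S * ‖v‖ ^ 2 * s) s := by
      have ha : HasDerivAt (fun s : ℝ => s * (inner ℝ (gradient L x) v : ℝ))
          (inner ℝ (gradient L x) v : ℝ) s := by
        simpa using (hasDerivAt_id s).mul_const (inner ℝ (gradient L x) v : ℝ)
      have hb : HasDerivAt (fun s : ℝ => S / 2 * ‖v‖ ^ 2 * s ^ 2)
          (S / 2 * ‖v‖ ^ 2 * (2 * s)) s := by
        simpa using ((hasDerivAt_pow 2 s).const_mul (S / 2 * ‖v‖ ^ 2))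
      have := (ha.const_add (L x)).add hb
      exact this.congr_deriv (by ring)
    exact h1.sub (hφ s)
  have hkey : ∀ s : ℝ, 0 ≤ s → 0 ≤ (inner ℝ (gradient L x) v : ℝ) + S * ‖v‖ ^ 2 * s
      - (inner ℝ (gradient L (x + s • v)) v : ℝ) := by
    intro s hs
    have h1 : (inner ℝ (gradient L (x + s • v)) v : ℝ) - (inner ℝ (gradient L x) v : ℝ)
        = (inner ℝ (gradient L (x + s • v) - gradient L x) v : ℝ) := by
      rw [inner_sub_left]
    have h2 : (inner ℝ (gradient L (x + s • v) - gradient L x) v : ℝ)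
        ≤ ‖gradient L (x + s • v) - gradient L x‖ * ‖v‖ := real_inner_le_norm _ _
    have h3 : ‖gradient L (x + s • v) - gradient L x‖ ≤ S * (s * ‖v‖) := by
      have := hlip.dist_le_mul (x + s • v) x
      rw [dist_eq_norm, dist_eq_norm] at this
      have h4 : (x + s • v) - x = s • v := by abel
      rw [h4, norm_smul] at this
      calc ‖gradient L (x + s • v) - gradient L x‖ ≤ S.toNNReal * (‖s‖ * ‖v‖) := this
        _ = S * (s * ‖v‖) := by
            rw [Real.coe_toNNReal S hS, Real.norm_eq_abs, abs_of_nonneg hs]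
    nlinarith [norm_nonneg v, h1, h2, h3]
  have hdiffψ : Differentiable ℝ ψ := fun s => (hψ s).differentiableAt
  have hmono : MonotoneOn ψ (Set.Icc (0:ℝ) 1) := by
    apply monotoneOn_of_deriv_nonneg (convex_Icc 0 1) hdiffψ.continuous.continuousOn
      (hdiffψ.differentiableOn)
    intro s hs
    rw [interior_Icc] at hs
    rw [(hψ s).deriv]
    exact hkey s hs.1.le
  have h01 := hmono (Set.mem_Icc.mpr ⟨le_refl 0, zero_le_one⟩)
    (Set.mem_Icc.mpr ⟨zero_le_one, le_refl 1⟩) zero_le_one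
  simp only [hψdef] at h01
  have he : x + (1:ℝ) • v = y := by rw [one_smul, hv]; abel
  have he0 : x + (0:ℝ) • v = x := by rw [zero_smul, add_zero]
  rw [he, he0] at h01
  simp only [zero_mul, mul_zero, add_zero, mul_one, one_mul, one_pow,
    ne_eq, OfNat.ofNat_ne_zero, not_false_eq_true, zero_pow, sub_self] at h01
  linarith

lemma comp_ineq (α B G a c D : ℝ) (hα0 : 0 < α) (hα1 : α ≤ 1) (hB : 0 ≤ B) (hG : 0 ≤ G)
    (haα : α ≤ a) (ha1 : a ≤ 1) (hc : |c| ≤ B) (hD : |D| ≤ G) :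
    α / 2 * D ^ 2 - ((1 - α) * B * G + B ^ 2 / 2) ≤ D * (a * D + c) - (a * D + c) ^ 2 / 2 := by
  obtain ⟨hc1, hc2⟩ := abs_le.mp hc
  obtain ⟨hD1, hD2⟩ := abs_le.mp hD
  have h1 : 0 ≤ (B - c) * (G - D) := mul_nonneg (by linarith) (by linarith)
  have h2 : 0 ≤ (B + c) * (G + D) := mul_nonneg (by linarith) (by linarith)
  have hcD : -(B * G) ≤ c * D := by nlinarith
  nlinarith [mul_nonneg (by linarith : (0:ℝ) ≤ 1 - a) (by linarith : (0:ℝ) ≤ c * D + B * G),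
    mul_nonneg (mul_nonneg (by linarith : (0:ℝ) ≤ a - α) (by linarith : (0:ℝ) ≤ 2 - a))
      (sq_nonneg D),
    mul_nonneg (by linarith : (0:ℝ) ≤ a - α) (mul_nonneg hB hG),
    mul_nonneg (mul_nonneg hα0.le (by linarith : (0:ℝ) ≤ 1 - a)) (sq_nonneg D),
    (by nlinarith : c ^ 2 ≤ B ^ 2)]



/-- Convergence of gradient descent with multiplicatively biased gradients (deterministic
skeleton of Theorem 1): with update `θ^{t+1} = θ^t - (1/S) g^t`, where
`g^t_j = a^t_j ∂ⱼL(θ^t) + c^t_j`, `α ≤ a^t_j ≤ 1`, `|c^t_j| ≤ B`, a lower bound `L*` on `L`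
and a bound `G` on the partial derivatives, the average squared gradient norm satisfies
`(1/T) ∑_{t<T} ‖∇L(θ^t)‖² ≤ 2S(L(θ⁰) - L*)/(αT) + (2d/α)((1 - α) B G + B²/2)`. -/
theorem biased_gradient_descent_convergence (d T : ℕ) (hd : 0 < d) (hT : 0 < T)
    (S : ℝ) (hS : 0 < S) (α : ℝ) (hα0 : 0 < α) (hα1 : α ≤ 1)
    (B : ℝ) (hB : 0 ≤ B) (G : ℝ) (hG : 0 ≤ G)
    (L : EuclideanSpace ℝ (Fin d) → ℝ) (hdiff : Differentiable ℝ L)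
    (hlip : LipschitzWith S.toNNReal (gradient L))
    (Lstar : ℝ) (hLstar : ∀ x, Lstar ≤ L x)
    (hgradbound : ∀ (x : EuclideanSpace ℝ (Fin d)) (j : Fin d), |gradient L x j| ≤ G)
    (θ g : ℕ → EuclideanSpace ℝ (Fin d)) (a c : ℕ → Fin d → ℝ)
    (hupd : ∀ t < T, θ (t + 1) = θ t - (1 / S) • g t)
    (hg : ∀ t < T, ∀ j, g t j = a t j * gradient L (θ t) j + c t j)
    (ha : ∀ t < T, ∀ j, α ≤ a t j ∧ a t j ≤ 1)
    (hc : ∀ t < T, ∀ j, |c t j| ≤ B) :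
    (1 / T) * ∑ t ∈ Finset.range T, ‖gradient L (θ t)‖ ^ 2 ≤
      2 * S * (L (θ 0) - Lstar) / (α * T) + (2 * d / α) * ((1 - α) * B * G + B ^ 2 / 2) := by
  set E : ℝ := (1 - α) * B * G + B ^ 2 / 2 with hE
  have hE0 : 0 ≤ E := by
    have h1 : 0 ≤ (1 - α) * B * G := mul_nonneg (mul_nonneg (by linarith) hB) hG
    have h2 : 0 ≤ B ^ 2 / 2 := by positivity
    rw [hE]; linarith
  -- Step bound
  have step : ∀ t < T, α / (2 * S) * ‖gradient L (θ t)‖ ^ 2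
      ≤ L (θ t) - L (θ (t + 1)) + d * E / S := by
    intro t ht
    set D := gradient L (θ t) with hD
    have hdesc := descent_lemma L hdiff S hS.le hlip (θ t) (θ (t + 1))
    have hsub : θ (t + 1) - θ t = (-(1 / S)) • g t := by
      rw [hupd t ht]; rw [neg_smul]; abel
    have hinner : (inner ℝ D (θ (t + 1) - θ t) : ℝ) = -(1 / S) * (inner ℝ D (g t) : ℝ) := by
      rw [hsub, real_inner_smul_right]
    have hnorm : ‖θ (t + 1) - θ t‖ ^ 2 = (1 / S) ^ 2 * ‖g t‖ ^ 2 := by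
      rw [hsub, norm_smul]
      rw [Real.norm_eq_abs, abs_neg, abs_of_nonneg (by positivity : (0:ℝ) ≤ 1 / S)]
      ring
    rw [hinner, hnorm] at hdesc
    -- componentwise bound: α/2 ‖D‖² - d E ≤ ⟪D, g t⟫ - ‖g t‖²/2
    have hDsum : ‖D‖ ^ 2 = ∑ j : Fin d, (D j) ^ 2 := by
      rw [EuclideanSpace.norm_sq_eq]; simp [sq]
    have hgsum : ‖g t‖ ^ 2 = ∑ j : Fin d, (g t j) ^ 2 := by
      rw [EuclideanSpace.norm_sq_eq]; simp [sq]
    have hinsum : (inner ℝ D (g t) : ℝ) = ∑ j : Fin d, D j * g t j := by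
      simp [PiLp.inner_apply, RCLike.inner_apply, mul_comm]
    have hcomp : α / 2 * ‖D‖ ^ 2 - d * E ≤ (inner ℝ D (g t) : ℝ) - ‖g t‖ ^ 2 / 2 := by
      rw [hDsum, hgsum, hinsum, Finset.mul_sum, Finset.sum_div, ← Finset.sum_sub_distrib]
      have : (d : ℝ) * E = ∑ _j : Fin d, E := by
        rw [Finset.sum_const, Finset.card_univ, Fintype.card_fin, nsmul_eq_mul]
      rw [this, ← Finset.sum_sub_distrib]
      apply Finset.sum_le_sum
      intro j _
      have := comp_ineq α B G (a t j) (c t j) (D j) hα0 hα1 hB hG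
        (ha t ht j).1 (ha t ht j).2 (hc t ht j) (hgradbound (θ t) j)
      rw [hg t ht j]
      linarith
    have hSne : S ≠ 0 := hS.ne'
    -- from hdesc : L (θ (t+1)) ≤ L (θ t) + (-(1/S)) * ⟪D, g t⟫ + S/2 * ((1/S)^2 * ‖g t‖^2)
    have h2 : L (θ (t + 1)) ≤ L (θ t) - (1 / S) * ((inner ℝ D (g t) : ℝ) - ‖g t‖ ^ 2 / 2) := by
      have : S / 2 * ((1 / S) ^ 2 * ‖g t‖ ^ 2) = (1 / S) * (‖g t‖ ^ 2 / 2) := by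
        field_simp
      linarith [hdesc, this.le, this.ge]
    have h3 : (1 / S) * (α / 2 * ‖D‖ ^ 2 - d * E) ≤ (1 / S) * ((inner ℝ D (g t) : ℝ) - ‖g t‖ ^ 2 / 2) :=
      mul_le_mul_of_nonneg_left hcomp (by positivity)
    have h4 : (1 / S) * (α / 2 * ‖D‖ ^ 2 - d * E) = α / (2 * S) * ‖D‖ ^ 2 - d * E / S := by
      field_simp
    linarith
  -- Sum up
  have hsum : α / (2 * S) * ∑ t ∈ Finset.range T, ‖gradient L (θ t)‖ ^ 2
      ≤ (L (θ 0) - Lstar) + T * (d * E / S) := by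
    rw [Finset.mul_sum]
    calc ∑ t ∈ Finset.range T, α / (2 * S) * ‖gradient L (θ t)‖ ^ 2
        ≤ ∑ t ∈ Finset.range T, ((L (θ t) - L (θ (t + 1))) + d * E / S) := by
          apply Finset.sum_le_sum
          intro t ht
          exact step t (Finset.mem_range.mp ht)
      _ = (L (θ 0) - L (θ T)) + T * (d * E / S) := by
          rw [Finset.sum_add_distrib, Finset.sum_range_sub' (fun t => L (θ t)),
            Finset.sum_const, Finset.card_range, nsmul_eq_mul]
      _ ≤ (L (θ 0) - Lstar) + T * (d * E / S) := by
          linarith [hLstar (θ T)]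
  set Ssum : ℝ := ∑ t ∈ Finset.range T, ‖gradient L (θ t)‖ ^ 2 with hSsum
  have hTpos : (0:ℝ) < T := by exact_mod_cast hT
  have key : Ssum ≤ 2 * S / α * (L (θ 0) - Lstar) + T * (2 * d / α) * E := by
    have h1 : Ssum = 2 * S / α * (α / (2 * S) * Ssum) := by field_simp
    calc Ssum = 2 * S / α * (α / (2 * S) * Ssum) := h1
      _ ≤ 2 * S / α * ((L (θ 0) - Lstar) + T * (d * E / S)) :=
          mul_le_mul_of_nonneg_left hsum (by positivity)
      _ = 2 * S / α * (L (θ 0) - Lstar) + T * (2 * d / α) * E := by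
          field_simp
  have := mul_le_mul_of_nonneg_left key (by positivity : (0:ℝ) ≤ 1 / T)
  calc (1 / (T:ℝ)) * Ssum ≤ (1 / T) * (2 * S / α * (L (θ 0) - Lstar) + T * (2 * d / α) * E) := this
    _ = 2 * S * (L (θ 0) - Lstar) / (α * T) + (2 * d / α) * E := by
        field_simp
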